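/- Let G be a Hausdorff topological group whose underlying space is not a P-space. Then G contains a subgroup H that is closed in G, nowhere dense in G, and a Gδ set in G; moreover H can be chosen of the form H = ⋂_{n∈ω} U_n where each U_n is a neighborhood of the identity with U_n = U_n⁻¹ and U_{n+1}·U_{n+1} ⊆ U_n for all n. -/

import Mathlib

open Set Topology Pointwise

universe u v w

/-- A cozero set: the set where some continuous real-valued function is nonzero. -/
def IsCozeroSet {X : Type u} [TopologicalSpace X] (s : Set X) : Prop :=
  ∃ f : X → ℝ, Continuous f ∧ s = {x | f x ≠ 0}

/-- An F-space: any two disjoint cozero sets are completely separated. -/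
def IsFSpace (X : Type u) [TopologicalSpace X] : Prop :=
  ∀ s t : Set X, IsCozeroSet s → IsCozeroSet t → Disjoint s t →
    ∃ g : X → ℝ, Continuous g ∧ (∀ x, g x ∈ Set.Icc (0 : ℝ) 1) ∧
      (∀ x ∈ s, g x = 0) ∧ (∀ x ∈ t, g x = 1)

/-- An F'-space: any two disjoint cozero sets have disjoint closures. -/
def IsFPrimeSpace (X : Type u) [TopologicalSpace X] : Prop :=
  ∀ s t : Set X, IsCozeroSet s → IsCozeroSet t → Disjoint s t →
    Disjoint (closure s) (closure t)

/-- A basically disconnected space: the closure of every cozero set is open. -/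
def IsBasicallyDisconnected (X : Type u) [TopologicalSpace X] : Prop :=
  ∀ s : Set X, IsCozeroSet s → IsOpen (closure s)

/-- A P-space: every Gδ set is open. -/
def IsPSpace (X : Type u) [TopologicalSpace X] : Prop :=
  ∀ s : Set X, IsGδ s → IsOpen s

/-- Covering dimension at most `n`: every finite open cover has a finite open
refinement in which every point belongs to at most `n + 1` members. -/
def CovDimLE (X : Type u) [TopologicalSpace X] (n : ℕ) : Prop :=
  ∀ 𝒰 : Finset (Set X), (∀ U ∈ 𝒰, IsOpen U) → ⋃₀ (𝒰 : Set (Set X)) = Set.univ →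
    ∃ 𝒱 : Finset (Set X), (∀ V ∈ 𝒱, IsOpen V) ∧ ⋃₀ (𝒱 : Set (Set X)) = Set.univ ∧
      (∀ V ∈ 𝒱, ∃ U ∈ 𝒰, V ⊆ U) ∧
      ∀ x : X, {V : Set X | V ∈ 𝒱 ∧ x ∈ V}.ncard ≤ n + 1

/-- An ℝ-quotient map: a continuous surjection such that a real-valued function on the
target is continuous whenever its composition with the map is continuous. -/
def IsRQuotientMap {X : Type u} {Y : Type v} [TopologicalSpace X] [TopologicalSpace Y]
    (p : X → Y) : Prop :=
  Continuous p ∧ Function.Surjective p ∧ ∀ φ : Y → ℝ, Continuous (φ ∘ p) → Continuous φ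

/-- A non-P-point: a point having a Gδ set around it which is not a neighborhood of it. -/
def IsNonPPoint {X : Type u} [TopologicalSpace X] (x : X) : Prop :=
  ∃ s : Set X, IsGδ s ∧ x ∈ s ∧ s ∉ nhds x

/-- In any Hausdorff topological group which is not a P-space there is a closed, nowhere
dense, Gδ subgroup of the form `⋂ n, U n` with the `U n` symmetric neighborhoods of `1`
satisfying `U (n+1) * U (n+1) ⊆ U n`. -/
theorem statement5 {G : Type u} [Group G] [TopologicalSpace G] [IsTopologicalGroup G]
    [T2Space G] (hG : ¬ IsPSpace G) :
    ∃ U : ℕ → Set G, (∀ n, U n ∈ nhds (1 : G)) ∧ (∀ n, (U n)⁻¹ = U n) ∧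
      (∀ n, U (n + 1) * U (n + 1) ⊆ U n) ∧
      ∃ H : Subgroup G, (H : Set G) = ⋂ n, U n ∧ IsClosed (H : Set G) ∧
        IsNowhereDense (H : Set G) ∧ IsGδ (H : Set G) := by
  classical
  rw [IsPSpace] at hG
  push_neg at hG
  obtain ⟨s, hs, hsopen⟩ := hG
  obtain ⟨x, hxs, hxnhds⟩ : ∃ x ∈ s, s ∉ nhds x := by
    by_contra h
    push_neg at h
    exact hsopen (isOpen_iff_mem_nhds.2 h)
  obtain ⟨V, hVopen, hsV⟩ := isGδ_iff_eq_iInter_nat.1 hs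
  -- W n : the translate of V n back to the identity
  set W : ℕ → Set G := fun n => (fun g => x * g) ⁻¹' V n with hW
  have hWopen : ∀ n, IsOpen (W n) := fun n => (hVopen n).preimage (continuous_mul_left x)
  have hWone : ∀ n, (1 : G) ∈ W n := by
    intro n
    have : x ∈ V n := mem_iInter.1 (hsV ▸ hxs) n
    simpa [hW, mem_preimage, mul_one] using this
  -- auxiliary step
  have aux : ∀ A : Set G, IsOpen A → (1 : G) ∈ A → ∀ n : ℕ,
      ∃ C : Set G, IsOpen C ∧ (1 : G) ∈ C ∧ C⁻¹ = C ∧ C * C ⊆ A ∧ C ⊆ W n := by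
    intro A hAopen hA1 n
    obtain ⟨D, hDopen, hD1, hDD⟩ := exists_open_nhds_one_mul_subset (hAopen.mem_nhds hA1)
    refine ⟨(D ∩ W n) ∩ (D ∩ W n)⁻¹, ?_, ?_, ?_, ?_, ?_⟩
    · exact ((hDopen.inter (hWopen n)).inter (hDopen.inter (hWopen n)).inv)
    · exact ⟨⟨hD1, hWone n⟩, by simp [hD1, hWone n]⟩
    · rw [Set.inter_inv, inv_inv, Set.inter_comm]
    · intro g hg
      obtain ⟨a, ha, b, hb, rfl⟩ := hg
      exact hDD (Set.mul_mem_mul ha.1.1 hb.1.1)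
    · exact fun g hg => hg.1.2
  choose step hstepO hstep1 hstepS hstepM hstepW using aux
  -- recursive construction
  let f : ℕ → {A : Set G // IsOpen A ∧ (1 : G) ∈ A} := fun n =>
    Nat.rec ⟨Set.univ, isOpen_univ, Set.mem_univ 1⟩
      (fun n p => ⟨step p.1 p.2.1 p.2.2 n,
        hstepO p.1 p.2.1 p.2.2 n, hstep1 p.1 p.2.1 p.2.2 n⟩) n
  set U : ℕ → Set G := fun n => (f n).1 with hUdef
  have hUopen : ∀ n, IsOpen (U n) := fun n => (f n).2.1
  have hU1 : ∀ n, (1 : G) ∈ U n := fun n => (f n).2.2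
  have hUsucc : ∀ n, U (n + 1) = step (f n).1 (f n).2.1 (f n).2.2 n := fun n => rfl
  have hUsymm : ∀ n, (U n)⁻¹ = U n := by
    intro n
    cases n with
    | zero => simp [hUdef, f]
    | succ n => rw [hUsucc]; exact hstepS _ _ _ n
  have hUmul : ∀ n, U (n + 1) * U (n + 1) ⊆ U n := by
    intro n; rw [hUsucc]; exact hstepM _ _ _ n
  have hUW : ∀ n, U (n + 1) ⊆ W n := by
    intro n; rw [hUsucc]; exact hstepW _ _ _ n
  -- the subgroup
  have hmulmem : ∀ {a b : G}, a ∈ ⋂ n, U n → b ∈ ⋂ n, U n → a * b ∈ ⋂ n, U n := by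
    intro a b ha hb
    refine mem_iInter.2 fun n => hUmul n ?_
    exact Set.mul_mem_mul (mem_iInter.1 ha (n + 1)) (mem_iInter.1 hb (n + 1))
  let H : Subgroup G :=
    { carrier := ⋂ n, U n
      one_mem' := mem_iInter.2 hU1
      mul_mem' := fun ha hb => hmulmem ha hb
      inv_mem' := by
        intro a ha
        refine mem_iInter.2 fun n => ?_
        rw [← hUsymm n]
        exact Set.inv_mem_inv.2 (mem_iInter.1 ha n) }
  have hHcar : (H : Set G) = ⋂ n, U n := rfl
  have hHclosed : IsClosed (H : Set G) := by
    rw [← isOpen_compl_iff]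
    rw [hHcar]
    rw [isOpen_compl_iff, ← closure_subset_iff_isClosed]
    intro y hy
    refine mem_iInter.2 fun n => ?_
    have hynbhd : y • U (n + 1) ∈ nhds y := by
      refine ((hUopen (n + 1)).smul y).mem_nhds ?_
      exact ⟨1, hU1 (n + 1), mul_one y⟩
    obtain ⟨h, hhU, hhH⟩ := mem_closure_iff_nhds.1 hy _ hynbhd
    obtain ⟨u, hu, rfl⟩ := hhU
    have : y = (y * u) * u⁻¹ := by group
    rw [this]
    refine hUmul n (Set.mul_mem_mul (mem_iInter.1 hhH (n + 1)) ?_)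
    rw [← hUsymm (n + 1)]
    exact Set.inv_mem_inv.2 hu
  have hHsubW : (H : Set G) ⊆ ⋂ n, W n := by
    intro h hh
    exact mem_iInter.2 fun n => hUW n (mem_iInter.1 hh (n + 1))
  have hHnd : IsNowhereDense (H : Set G) := by
    rw [IsNowhereDense, hHclosed.closure_eq]
    by_contra hne
    obtain ⟨z, hz⟩ := Set.nonempty_iff_ne_empty.2 hne
    have hHopen : IsOpen (H : Set G) :=
      Subgroup.isOpen_of_mem_nhds H (mem_interior_iff_mem_nhds.1 hz)
    -- then s is a neighborhood of x
    apply hxnhds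
    have hsub : x • (H : Set G) ⊆ s := by
      rintro _ ⟨h, hh, rfl⟩
      have := hHsubW hh
      rw [hsV]
      exact mem_iInter.2 fun n => mem_iInter.1 this n
    refine Filter.mem_of_superset ?_ hsub
    refine (hHopen.smul x).mem_nhds ?_
    exact ⟨1, H.one_mem, mul_one x⟩
  have hHgd : IsGδ (H : Set G) := by
    rw [hHcar]
    exact IsGδ.iInter_of_isOpen hUopen
  exact ⟨U, fun n => (hUopen n).mem_nhds (hU1 n), hUsymm, hUmul,
    H, hHcar, hHclosed, hHnd, hHgd⟩
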